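/- Let k ∈ ℝ and let h : ℝ² → ℝ be C² on ℝ² \ {0} and positively homogeneous of degree k. Let v ≠ 0 with k · h(v) ≠ 0. Then for every X ∈ ℝ²: D²h(v)(X, X) = (2·K₂(h)(v)/(k·h(v))²) · ρ_v(X)² + ((k − 1)/(k·h(v))) · (Dh(v)(X))². -/

import Mathlib

/-- First partial derivative of `h : ℝ² → ℝ` in the `i`-th coordinate direction. -/
noncomputable def pd1 (h : (Fin 2 → ℝ) → ℝ) (i : Fin 2) (x : Fin 2 → ℝ) : ℝ :=
  fderiv ℝ h x (Pi.single i 1)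

/-- Second partial derivative of `h : ℝ² → ℝ`. -/
noncomputable def pd2 (h : (Fin 2 → ℝ) → ℝ) (i j : Fin 2) (x : Fin 2 → ℝ) : ℝ :=
  iteratedFDeriv ℝ 2 h x ![Pi.single i 1, Pi.single j 1]

/-- The relative invariant `K₂(h) = (1/2)(h₁₁h₂² − 2h₁₂h₁h₂ + h₂₂h₁²)` of binary forms. -/
noncomputable def K2 (h : (Fin 2 → ℝ) → ℝ) (x : Fin 2 → ℝ) : ℝ :=
  (1 / 2) * (pd2 h 0 0 x * (pd1 h 1 x) ^ 2 - 2 * pd2 h 0 1 x * pd1 h 0 x * pd1 h 1 x +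
    pd2 h 1 1 x * (pd1 h 0 x) ^ 2)

open Filter Topology

/-- Derivative along the ray through `v` of a function that is homogeneous on that ray. -/
private lemma ray_deriv {f : (Fin 2 → ℝ) → ℝ} {v : Fin 2 → ℝ} {c C : ℝ}
    (hd : DifferentiableAt ℝ f v)
    (hray : ∀ t : ℝ, 0 < t → f (t • v) = t ^ c * C) :
    fderiv ℝ f v v = c * C := by
  have hfd : HasFDerivAt f (fderiv ℝ f v) ((fun t : ℝ => t • v) 1) := by
    simpa using hd.hasFDerivAt
  have hg : HasDerivAt (fun t : ℝ => t • v) v 1 := by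
    simpa using (hasDerivAt_id (1:ℝ)).smul_const v
  have h1 : HasDerivAt (fun t : ℝ => f (t • v)) (fderiv ℝ f v v) 1 :=
    hfd.comp_hasDerivAt 1 hg
  have h2 : HasDerivAt (fun t : ℝ => t ^ c * C) (c * C) 1 := by
    have := (Real.hasDerivAt_rpow_const (x := 1) (p := c) (Or.inl one_ne_zero)).mul_const C
    simpa using this
  have hev : (fun t : ℝ => f (t • v)) =ᶠ[𝓝 (1:ℝ)] fun t => t ^ c * C := by
    filter_upwards [eventually_gt_nhds one_pos] with t ht using hray t ht
  exact h1.unique (h2.congr_of_eventuallyEq hev)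

theorem hessian_binary_form (k : ℝ) (h : (Fin 2 → ℝ) → ℝ)
    (hf : ContDiffOn ℝ 2 h {x | x ≠ 0})
    (hhom : ∀ t : ℝ, 0 < t → ∀ x : Fin 2 → ℝ, x ≠ 0 → h (t • x) = t ^ k * h x)
    (v : Fin 2 → ℝ) (hv : v ≠ 0) (hkh : k * h v ≠ 0) (X : Fin 2 → ℝ) :
    iteratedFDeriv ℝ 2 h v ![X, X] =
      (2 * K2 h v / (k * h v) ^ 2) * (v 1 * X 0 - v 0 * X 1) ^ 2 +
      ((k - 1) / (k * h v)) * (fderiv ℝ h v X) ^ 2 := by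
  have hopen : IsOpen {x : Fin 2 → ℝ | x ≠ 0} := isOpen_ne
  have hd1 : ∀ y : Fin 2 → ℝ, y ≠ 0 → DifferentiableAt ℝ h y := fun y hy =>
    (hf.contDiffAt (hopen.mem_nhds hy)).differentiableAt two_ne_zero
  have hC2 : ContDiffAt ℝ 2 h v := hf.contDiffAt (hopen.mem_nhds hv)
  have hdf : DifferentiableAt ℝ (fderiv ℝ h) v :=
    (hC2.fderiv_right (m := 1) le_rfl).differentiableAt one_ne_zero
  -- homogeneity of the derivative along the ray through v
  have hfd_hom : ∀ t : ℝ, 0 < t → ∀ Y, fderiv ℝ h (t • v) Y = t ^ (k-1) * fderiv ℝ h v Y := by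
    intro t ht Y
    have htne : t ≠ 0 := ne_of_gt ht
    have htv : t • v ≠ 0 := smul_ne_zero htne hv
    have hev : (fun x => h (t • x)) =ᶠ[𝓝 v] fun x => t ^ k * h x := by
      filter_upwards [hopen.mem_nhds hv] with x hx using hhom t ht x hx
    have hc : HasFDerivAt (fun x : Fin 2 → ℝ => t • x)
        (t • ContinuousLinearMap.id ℝ (Fin 2 → ℝ)) v := (hasFDerivAt_id v).const_smul t
    have hcomp := ((hd1 _ htv).hasFDerivAt.comp v hc).fderiv
    have hL : fderiv ℝ (fun x => h (t • x)) v = t • (fderiv ℝ h (t • v)) := by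
      rw [show (fun x => h (t • x)) = h ∘ (fun x : Fin 2 → ℝ => t • x) from rfl, hcomp]
      ext Y
      show fderiv ℝ h (t • v) ((t • ContinuousLinearMap.id ℝ (Fin 2 → ℝ)) Y)
          = t • fderiv ℝ h (t • v) Y
      rw [ContinuousLinearMap.smul_apply, ContinuousLinearMap.id_apply,
        (fderiv ℝ h (t • v)).map_smul]
    have hR : fderiv ℝ (fun x => t ^ k * h x) v = t ^ k • fderiv ℝ h v :=
      fderiv_const_mul (hd1 v hv) _
    have heq : fderiv ℝ (fun x => h (t • x)) v = fderiv ℝ (fun x => t ^ k * h x) v :=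
      hev.fderiv_eq
    rw [hL, hR] at heq
    have happ : (t • fderiv ℝ h (t • v)) Y = (t ^ k • fderiv ℝ h v) Y := by rw [heq]
    simp only [ContinuousLinearMap.smul_apply, smul_eq_mul] at happ
    rw [Real.rpow_sub ht, Real.rpow_one]
    field_simp
    linear_combination happ
  -- Euler identities
  have euler1 : fderiv ℝ h v v = k * h v :=
    ray_deriv (hd1 v hv) (fun t ht => by rw [hhom t ht v hv])
  have euler2 : ∀ Y, fderiv ℝ (fderiv ℝ h) v v Y = (k-1) * fderiv ℝ h v Y := by
    intro Y
    have hdY : HasFDerivAt (fun x => fderiv ℝ h x Y)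
        ((fderiv ℝ h v).comp (0 : (Fin 2 → ℝ) →L[ℝ] (Fin 2 → ℝ)) +
          (fderiv ℝ (fderiv ℝ h) v).flip Y) v :=
      hdf.hasFDerivAt.clm_apply (hasFDerivAt_const Y v)
    have h1 := ray_deriv hdY.differentiableAt (fun t ht => hfd_hom t ht Y)
    rw [hdY.fderiv] at h1
    simpa using h1
  -- symmetry of the second derivative
  have hsymm : ∀ a b, fderiv ℝ (fderiv ℝ h) v a b = fderiv ℝ (fderiv ℝ h) v b a :=
    hC2.isSymmSndFDerivAt (by simp)
  -- coordinate expansions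
  have hXsplit : ∀ x : Fin 2 → ℝ,
      x 0 • (Pi.single 0 1 : Fin 2 → ℝ) + x 1 • (Pi.single 1 1 : Fin 2 → ℝ) = x := by
    intro x; funext i; fin_cases i <;> simp
  have expand1 : ∀ x : Fin 2 → ℝ, fderiv ℝ h v x =
      x 0 * fderiv ℝ h v (Pi.single 0 1) + x 1 * fderiv ℝ h v (Pi.single 1 1) := by
    intro x
    conv_lhs => rw [← hXsplit x]
    simp [smul_eq_mul]
  have expand2 : ∀ x y : Fin 2 → ℝ, fderiv ℝ (fderiv ℝ h) v x y =
      x 0 * y 0 * fderiv ℝ (fderiv ℝ h) v (Pi.single 0 1) (Pi.single 0 1) +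
      x 0 * y 1 * fderiv ℝ (fderiv ℝ h) v (Pi.single 0 1) (Pi.single 1 1) +
      x 1 * y 0 * fderiv ℝ (fderiv ℝ h) v (Pi.single 1 1) (Pi.single 0 1) +
      x 1 * y 1 * fderiv ℝ (fderiv ℝ h) v (Pi.single 1 1) (Pi.single 1 1) := by
    intro x y
    conv_lhs => rw [← hXsplit x, ← hXsplit y]
    simp [smul_eq_mul]
    ring
  -- abbreviations
  set H00 := fderiv ℝ (fderiv ℝ h) v (Pi.single 0 1) (Pi.single 0 1) with hH00
  set H01 := fderiv ℝ (fderiv ℝ h) v (Pi.single 0 1) (Pi.single 1 1) with hH01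
  set H10 := fderiv ℝ (fderiv ℝ h) v (Pi.single 1 1) (Pi.single 0 1) with hH10
  set H11 := fderiv ℝ (fderiv ℝ h) v (Pi.single 1 1) (Pi.single 1 1) with hH11
  set g0 := fderiv ℝ h v (Pi.single 0 1) with hg0
  set g1 := fderiv ℝ h v (Pi.single 1 1) with hg1
  have e3 : H01 = H10 := hsymm _ _
  have e1' : v 0 * g0 + v 1 * g1 = k * h v := by rw [← expand1 v]; exact euler1
  have e2a : v 0 * H00 + v 1 * H10 = (k - 1) * g0 := by
    have := euler2 (Pi.single 0 1)
    rw [expand2 v (Pi.single 0 1)] at this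
    simpa using this
  have e2b : v 0 * H01 + v 1 * H11 = (k - 1) * g1 := by
    have := euler2 (Pi.single 1 1)
    rw [expand2 v (Pi.single 1 1)] at this
    simpa using this
  -- rewrite the goal in coordinates
  rw [iteratedFDeriv_two_apply]
  simp only [Matrix.cons_val_zero, Matrix.cons_val_one, Matrix.head_cons]
  rw [expand2 X X, expand1 X]
  have hpd2 : ∀ i j : Fin 2, pd2 h i j v =
      fderiv ℝ (fderiv ℝ h) v (Pi.single i 1) (Pi.single j 1) := by
    intro i j
    rw [pd2, iteratedFDeriv_two_apply]
    simp
  have hK2 : K2 h v = (1/2) * (H00 * g1 ^ 2 - 2 * H01 * g0 * g1 + H11 * g0 ^ 2) := by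
    rw [K2, hpd2, hpd2, hpd2]
    simp [pd1, ← hg0, ← hg1, ← hH00, ← hH01, ← hH11]
  rw [hK2]
  set A := X 0 * g0 + X 1 * g1 with hA
  set R := v 1 * X 0 - v 0 * X 1 with hR
  set u := k * h v with hu
  have h1 : u * X 0 = A * v 0 + R * g1 := by rw [hA, hR, hu]; linear_combination (-(X 0)) * e1'
  have h2 : u * X 1 = A * v 1 - R * g0 := by rw [hA, hR, hu]; linear_combination (-(X 1)) * e1'
  have key : (X 0 * X 0 * H00 + X 0 * X 1 * H01 + X 1 * X 0 * H10 + X 1 * X 1 * H11) * u ^ 2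
      = (k - 1) * u * A ^ 2 + (H00 * g1 ^ 2 - 2 * H01 * g0 * g1 + H11 * g0 ^ 2) * R ^ 2 := by
    calc (X 0 * X 0 * H00 + X 0 * X 1 * H01 + X 1 * X 0 * H10 + X 1 * X 1 * H11) * u ^ 2
        = H00 * ((u * X 0) * (u * X 0)) + H01 * ((u * X 0) * (u * X 1)) +
          H10 * ((u * X 1) * (u * X 0)) + H11 * ((u * X 1) * (u * X 1)) := by ring
      _ = H00 * ((A * v 0 + R * g1) * (A * v 0 + R * g1)) +
          H01 * ((A * v 0 + R * g1) * (A * v 1 - R * g0)) +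
          H10 * ((A * v 1 - R * g0) * (A * v 0 + R * g1)) +
          H11 * ((A * v 1 - R * g0) * (A * v 1 - R * g0)) := by rw [h1, h2]
      _ = (k - 1) * u * A ^ 2 + (H00 * g1 ^ 2 - 2 * H01 * g0 * g1 + H11 * g0 ^ 2) * R ^ 2 := by
          linear_combination (A^2 * v 0 + 2 * A * R * g1) * e2a +
            (A^2 * v 1 - 2 * A * R * g0) * e2b + ((k - 1) * A^2) * e1' +
            (A * R * (v 0 * g0 + v 1 * g1) + R^2 * g0 * g1) * e3
  have hune : u ≠ 0 := hkh
  have hu2 : u ^ 2 ≠ 0 := pow_ne_zero 2 hune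
  have expandRHS : 2 * (1 / 2 * (H00 * g1 ^ 2 - 2 * H01 * g0 * g1 + H11 * g0 ^ 2)) / u ^ 2 * R ^ 2
        + (k - 1) / u * (X 0 * g0 + X 1 * g1) ^ 2
      = ((H00 * g1 ^ 2 - 2 * H01 * g0 * g1 + H11 * g0 ^ 2) * R ^ 2 + (k - 1) * u * A ^ 2) / u ^ 2 := by
    rw [hA]
    field_simp
  rw [expandRHS, eq_div_iff hu2]
  linear_combination key
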